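/- Let ρ > 0 and p₁ = (x₁, y₁) ∈ ℝ² with d₁₂ := ‖p₁‖ ≥ 2ρ, and let β₁ be the polar angle of p₁. Define L₁(θ) = √(d₁₂² − 2ρ(x₁ sin θ − y₁ cos θ)) and φ₁(θ) = atan2(y₁ + ρ cos θ, x₁ − ρ sin θ) + arctan(ρ / L₁(θ)). Then for every θ with L₁(θ) > 0, one has the identity d₁₂ · sin(φ₁(θ) − β₁) = ρ(1 − cos(φ₁(θ) − θ − π)). -/

import Mathlib

/-- Four-quadrant arctangent: `atan2 y x` is the argument of the complex number `x + y i`. -/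
noncomputable def atan2 (y x : ℝ) : ℝ := Complex.arg ⟨x, y⟩

/-- Tangent-segment length of the SR Dubins path from `p₁ = (x₁, y₁)` to the origin
arriving with heading `θ`: `L₁(θ) = √(‖p₁‖² − 2ρ(x₁ sin θ − y₁ cos θ))`. -/
noncomputable def Lsr (ρ x₁ y₁ θ : ℝ) : ℝ :=
  Real.sqrt (Real.sqrt (x₁ ^ 2 + y₁ ^ 2) ^ 2 - 2 * ρ * (x₁ * Real.sin θ - y₁ * Real.cos θ))

/-- Heading along the straight segment of the reversed (LS) path:
`φ₁(θ) = atan2(y₁ + ρ cos θ, x₁ − ρ sin θ) + arctan(ρ / L₁(θ))`. -/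
noncomputable def φsr (ρ x₁ y₁ θ : ℝ) : ℝ :=
  atan2 (y₁ + ρ * Real.cos θ) (x₁ - ρ * Real.sin θ) + Real.arctan (ρ / Lsr ρ x₁ y₁ θ)

/-- Total SR Dubins path length `D₁(θ) = ρ(φ₁(θ) − θ − π) + L₁(θ)`. -/
noncomputable def Dsr (ρ x₁ y₁ θ : ℝ) : ℝ :=
  ρ * (φsr ρ x₁ y₁ θ - θ - Real.pi) + Lsr ρ x₁ y₁ θ

/- STATEMENT 8: with β₁ the polar angle of p₁ (d₁₂ = ‖p₁‖ ≥ 2ρ), for every θ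
with L₁(θ) > 0 one has d₁₂ · sin(φ₁(θ) − β₁) = ρ(1 − cos(φ₁(θ) − θ − π)). -/
set_option maxHeartbeats 2000000 in
theorem stmt8 (ρ x₁ y₁ β₁ : ℝ) (hρ : 0 < ρ)
    (hd : 2 * ρ ≤ Real.sqrt (x₁ ^ 2 + y₁ ^ 2))
    (hβ₁ : x₁ = Real.sqrt (x₁ ^ 2 + y₁ ^ 2) * Real.cos β₁)
    (hβ₂ : y₁ = Real.sqrt (x₁ ^ 2 + y₁ ^ 2) * Real.sin β₁) :
    ∀ θ : ℝ, 0 < Lsr ρ x₁ y₁ θ →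
      Real.sqrt (x₁ ^ 2 + y₁ ^ 2) * Real.sin (φsr ρ x₁ y₁ θ - β₁)
        = ρ * (1 - Real.cos (φsr ρ x₁ y₁ θ - θ - Real.pi)) := by
  intro θ hL
  set d := Real.sqrt (x₁ ^ 2 + y₁ ^ 2) with hdset
  have hd2 : d ^ 2 = x₁ ^ 2 + y₁ ^ 2 := Real.sq_sqrt (by positivity)
  set L := Lsr ρ x₁ y₁ θ with hLdef
  have hinner : (0:ℝ) < d ^ 2 - 2 * ρ * (x₁ * Real.sin θ - y₁ * Real.cos θ) :=
    Real.sqrt_pos.mp hL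
  have hL2 : L ^ 2 = d ^ 2 - 2 * ρ * (x₁ * Real.sin θ - y₁ * Real.cos θ) :=
    Real.sq_sqrt hinner.le
  set s := Real.sin θ with hs
  set c := Real.cos θ with hc
  have hsc : s ^ 2 + c ^ 2 = 1 := Real.sin_sq_add_cos_sq θ
  set a := x₁ - ρ * s with ha
  set b := y₁ + ρ * c with hb
  have hab : a ^ 2 + b ^ 2 = L ^ 2 + ρ ^ 2 := by
    rw [ha, hb, hL2]; nlinarith [hsc, hd2]
  set R := Real.sqrt (L ^ 2 + ρ ^ 2) with hRdef
  have hRpos : 0 < R := Real.sqrt_pos.mpr (by positivity)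
  have hR2 : R ^ 2 = L ^ 2 + ρ ^ 2 := Real.sq_sqrt (by positivity)
  have hz : (⟨a, b⟩ : ℂ) ≠ 0 := by
    intro h
    rw [Complex.ext_iff] at h
    simp at h
    nlinarith [h.1, h.2, hab, hL.le]
  have habs : ‖(⟨a, b⟩ : ℂ)‖ = R := by
    rw [Complex.norm_def, Complex.normSq_mk, hRdef]
    congr 1
    nlinarith [hab]
  have hcosA : Real.cos (atan2 b a) = a / R := by
    rw [atan2, Complex.cos_arg hz, habs]
  have hsinA : Real.sin (atan2 b a) = b / R := by
    rw [atan2, Complex.sin_arg, habs]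
  have hsqrt1 : Real.sqrt (1 + (ρ / L) ^ 2) = R / L := by
    rw [show 1 + (ρ / L) ^ 2 = (L ^ 2 + ρ ^ 2) / L ^ 2 by field_simp,
      Real.sqrt_div (by positivity), Real.sqrt_sq hL.le]
  have hcosG : Real.cos (Real.arctan (ρ / L)) = L / R := by
    rw [Real.cos_arctan, hsqrt1]
    field_simp
  have hsinG : Real.sin (Real.arctan (ρ / L)) = ρ / R := by
    rw [Real.sin_arctan, hsqrt1]
    field_simp
  have hφ : φsr ρ x₁ y₁ θ = atan2 b a + Real.arctan (ρ / L) := rfl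
  rw [hφ, Real.sin_sub, Real.cos_sub_pi, Real.cos_sub, Real.sin_add, Real.cos_add,
    hcosA, hsinA, hcosG, hsinG]
  rw [← hs, ← hc]
  rw [hβ₁] at hL2 ha
  rw [hβ₂] at hL2 hb
  have hscb : Real.sin β₁ ^ 2 + Real.cos β₁ ^ 2 = 1 := Real.sin_sq_add_cos_sq β₁
  field_simp
  rw [ha, hb]
  linear_combination (-ρ) * hL2 + (-ρ) * hR2 + ρ * d ^ 2 * hscb + ρ ^ 3 * hsc
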